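/- arXiv:1004.0751 — 11 statements merged into one kernel-verified Lean document; each statement's English description precedes it below -/
import Mathlib

section
/- Zero-curvature (Lax) representation of the first positive isospectral four-potential Ablowitz–Ladik flow: let K¹(n) = ((1 − Q(n)R(n))·S(n), −(1 − Q(n)R(n))·T(n−1), (1 − S(n)T(n))·Q(n+1), −(1 − S(n)T(n))·R(n)) and V¹(n) = [[(1/2)z² − Q(n)T(n−1), z·Q(n)], [z·T(n−1), −(1/2)z²]]. Then for every n ∈ ℤ, U′[K¹](n) = V¹(n+1)·U(n) − U(n)·V¹(n). -/
open Matrix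

/-- The four-potential Ablowitz–Ladik spectral matrix. -/
def ALU {F : Type*} [CommRing F] (z : Fˣ) (Q R S T : ℤ → F) (n : ℤ) :
    Matrix (Fin 2) (Fin 2) F :=
  !![(z : F) ^ 2 + S n * R n, (z : F) * Q n + (↑z⁻¹ : F) * S n;
     (z : F) * T n + (↑z⁻¹ : F) * R n, (↑z⁻¹ : F) ^ 2 + T n * Q n]

/-- The Gateaux derivative of the Ablowitz–Ladik spectral matrix `U` in the direction of
the vector field `X = (X₁, X₂, X₃, X₄)`: the linearization of the entries of `U(n)` in
`(Q(n), R(n), S(n), T(n))`. -/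
def ALUder {F : Type*} [CommRing F] (z : Fˣ) (Q R S T X₁ X₂ X₃ X₄ : ℤ → F) (n : ℤ) :
    Matrix (Fin 2) (Fin 2) F :=
  !![S n * X₂ n + R n * X₃ n, (z : F) * X₁ n + (↑z⁻¹ : F) * X₃ n;
     (z : F) * X₄ n + (↑z⁻¹ : F) * X₂ n, T n * X₁ n + Q n * X₄ n]

/-- Zero-curvature (Lax) representation of the first positive isospectral four-potential
Ablowitz–Ladik flow: `U′[K¹](n) = V¹(n+1)·U(n) − U(n)·V¹(n)`. -/
theorem AL_zcr_isospectral_first {F : Type*} [CommRing F] [Invertible (2 : F)]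
    (z : Fˣ) (Q R S T : ℤ → F) :
    ∀ n : ℤ,
      ALUder z Q R S T
          (fun k => (1 - Q k * R k) * S k)
          (fun k => -((1 - Q k * R k) * T (k - 1)))
          (fun k => (1 - S k * T k) * Q (k + 1))
          (fun k => -((1 - S k * T k) * R k)) n
        = (fun k : ℤ => !![⅟(2 : F) * (z : F) ^ 2 - Q k * T (k - 1), (z : F) * Q k;
              (z : F) * T (k - 1), -(⅟(2 : F) * (z : F) ^ 2)]) (n + 1)
            * ALU z Q R S T n
          - ALU z Q R S T n
            * (fun k : ℤ => !![⅟(2 : F) * (z : F) ^ 2 - Q k * T (k - 1), (z : F) * Q k;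
                (z : F) * T (k - 1), -(⅟(2 : F) * (z : F) ^ 2)]) n := by
  intro n
  have hz' : (z : F) * (↑z⁻¹ : F) = 1 := by
    rw [← Units.val_mul, mul_inv_cancel]; rfl
  have h2 : (2 : F) * ⅟(2 : F) = 1 := mul_invOf_self 2
  have h1 : n + 1 - 1 = n := by ring
  ext i j
  fin_cases i <;> fin_cases j <;>
    simp [ALU, ALUder, h1, Matrix.mul_apply, Fin.sum_univ_succ]
  · linear_combination (S n * T (n-1) - R n * Q (n+1)) * hz'
  · linear_combination (-(↑z⁻¹:F) * Q (n+1) - (z:F) * S n) * hz'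
      + (-(z:F)*(z:F)*(↑z⁻¹:F) * S n - (z:F)*(z:F)*(z:F) * Q n) * h2
  · linear_combination ((↑z⁻¹:F) * T (n-1) + (z:F) * R n) * hz'
      + ((z:F)*(z:F)*(↑z⁻¹:F) * R n + (z:F)*(z:F)*(z:F) * T n) * h2
  · linear_combination (Q n * R n - S n * T n) * hz'
end

section
/- Zero-curvature (Lax) representation of the first negative isospectral four-potential Ablowitz–Ladik flow: let K⁻¹(n) = ((1 − Q(n)R(n))·S(n−1), −(1 − Q(n)R(n))·T(n), (1 − S(n)T(n))·Q(n), −(1 − S(n)T(n))·R(n+1)) and V⁻¹(n) = [[(1/2)z⁻², −z⁻¹·S(n−1)], [−z⁻¹·R(n), −(1/2)z⁻² + R(n)S(n−1)]]. Then for every n ∈ ℤ, U′[K⁻¹](n) = V⁻¹(n+1)·U(n) − U(n)·V⁻¹(n). -/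
open Matrix

/-- Zero-curvature (Lax) representation of the first negative isospectral four-potential
Ablowitz–Ladik flow: `U′[K⁻¹](n) = V⁻¹(n+1)·U(n) − U(n)·V⁻¹(n)`. -/
theorem AL_zcr_isospectral_neg_first {F : Type*} [CommRing F] [Invertible (2 : F)]
    (z : Fˣ) (Q R S T : ℤ → F) :
    ∀ n : ℤ,
      ALUder z Q R S T
          (fun k => (1 - Q k * R k) * S (k - 1))
          (fun k => -((1 - Q k * R k) * T k))
          (fun k => (1 - S k * T k) * Q k)
          (fun k => -((1 - S k * T k) * R (k + 1))) n
        = (fun k : ℤ => !![⅟(2 : F) * (↑z⁻¹ : F) ^ 2, -((↑z⁻¹ : F) * S (k - 1));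
              -((↑z⁻¹ : F) * R k), -(⅟(2 : F) * (↑z⁻¹ : F) ^ 2) + R k * S (k - 1)]) (n + 1)
            * ALU z Q R S T n
          - ALU z Q R S T n
            * (fun k : ℤ => !![⅟(2 : F) * (↑z⁻¹ : F) ^ 2, -((↑z⁻¹ : F) * S (k - 1));
                -((↑z⁻¹ : F) * R k), -(⅟(2 : F) * (↑z⁻¹ : F) ^ 2) + R k * S (k - 1)]) n := by
  intro n
  have hz : (z : F) * (↑z⁻¹ : F) = 1 := by
    rw [← Units.val_mul, mul_inv_cancel, Units.val_one]
  have h2 : (2 : F) * ⅟(2 : F) = 1 := mul_invOf_self 2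
  have h1 : n + 1 - 1 = n := by ring
  ext i j
  fin_cases i <;> fin_cases j <;>
    simp [ALUder, ALU, Matrix.mul_apply, Fin.sum_univ_succ, h1]
  · linear_combination (S n * T n - Q n * R n) * hz
  · linear_combination (-(2:F) * (↑z⁻¹:F) * Q n * ⅟(2:F) - (z:F) * S (n-1)) * hz +
      (-(↑z⁻¹:F)^3 * S n - (↑z⁻¹:F) * Q n) * h2
  · linear_combination ((z:F) * R (n+1) + (2:F) * (↑z⁻¹:F) * T n * ⅟(2:F)) * hz +
      ((↑z⁻¹:F)^3 * R n + (↑z⁻¹:F) * T n) * h2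
  · linear_combination (Q n * R (n+1) - T n * S (n-1)) * hz
end

section
/- Zero-curvature representation of the zeroth non-isospectral four-potential Ablowitz–Ladik flow: let σ⁰(n) = ((2n + 1/2)·Q(n), −(2n + 1/2)·R(n), (2n + 3/2)·S(n), −(2n + 3/2)·T(n)) (with the integer n cast into F), let W⁰(n) = [[n, 0], [0, −n]], and let U_z(n) = [[2z, Q(n) − z⁻²·S(n)], [T(n) − z⁻²·R(n), −2z⁻³]] be the formal z-derivative of U(n). Then for every n ∈ ℤ, U′[σ⁰](n) = W⁰(n+1)·U(n) − U(n)·W⁰(n) − (1/2)·z·U_z(n). -/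
open Matrix

/-- Zero-curvature representation of the zeroth non-isospectral four-potential
Ablowitz–Ladik flow `σ⁰`, with `W⁰(n) = diag(n, −n)` and `U_z` the formal `z`-derivative
of `U`: `U′[σ⁰](n) = W⁰(n+1)·U(n) − U(n)·W⁰(n) − (1/2)·z·U_z(n)`. -/
theorem AL_zcr_nonisospectral_zeroth {F : Type*} [CommRing F] [Invertible (2 : F)]
    (z : Fˣ) (Q R S T : ℤ → F) :
    ∀ n : ℤ,
      ALUder z Q R S T
          (fun k => (2 * (k : F) + ⅟(2 : F)) * Q k)
          (fun k => -((2 * (k : F) + ⅟(2 : F)) * R k))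
          (fun k => (2 * (k : F) + 3 * ⅟(2 : F)) * S k)
          (fun k => -((2 * (k : F) + 3 * ⅟(2 : F)) * T k)) n
        = (fun k : ℤ => !![(k : F), 0; 0, -(k : F)]) (n + 1) * ALU z Q R S T n
          - ALU z Q R S T n * (fun k : ℤ => !![(k : F), 0; 0, -(k : F)]) n
          - (⅟(2 : F) * (z : F)) •
              !![2 * (z : F), Q n - (↑z⁻¹ : F) ^ 2 * S n;
                 T n - (↑z⁻¹ : F) ^ 2 * R n, -(2 * (↑z⁻¹ : F) ^ 3)] := by
  intro n
  have hz : (z : F) * (↑z⁻¹ : F) = 1 := by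
    rw [← Units.val_mul, mul_inv_cancel, Units.val_one]
  have h2 : (⅟(2 : F)) * 2 = 1 := invOf_mul_self 2
  simp only [ALUder, ALU]
  ext i j
  fin_cases i <;> fin_cases j <;>
    simp [Matrix.mul_apply, Fin.sum_univ_succ, Int.cast_add]
  · linear_combination (S n * R n + (z : F) ^ 2) * h2
  · linear_combination ((z : F) * Q n + (↑z⁻¹ : F) * S n) * h2 - ⅟(2:F) * (↑z⁻¹ : F) * S n * hz
  · linear_combination -(((z : F) * T n + (↑z⁻¹ : F) * R n) * h2) - ⅟(2:F) * (↑z⁻¹ : F) * R n * hz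
  · linear_combination -((T n * Q n + (↑z⁻¹ : F) ^ 2) * h2) - ((↑z⁻¹ : F) ^ 2 * ⅟(2:F) * 2) * hz
end

section
/- Auxiliary split Lax representation of the first positive isospectral four-potential Ablowitz–Ladik flow: let K¹(n) = ((1 − Q(n)R(n))·S(n), −(1 − Q(n)R(n))·T(n−1), (1 − S(n)T(n))·Q(n+1), −(1 − S(n)T(n))·R(n)), V¹(n) = [[(1/2)z² − Q(n)T(n−1), z·Q(n)], [z·T(n−1), −(1/2)z²]] and V̂¹(n) = [[(1/2)z² − R(n)S(n), z·S(n)], [z·R(n), −(1/2)z²]]. Then for every n ∈ ℤ the two auxiliary zero-curvature equations hold: [[0, K¹₁(n)], [K¹₂(n), 0]] = V̂¹(n)·U¹(n) − U¹(n)·V¹(n) and [[0, K¹₃(n)], [K¹₄(n), 0]] = V¹(n+1)·U²(n) − U²(n)·V̂¹(n), where the left-hand sides are the derivatives of U¹(n) and U²(n) under Q_t = K¹₁, R_t = K¹₂, S_t = K¹₃, T_t = K¹₄. -/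
open Matrix

/-- The first factor `U¹(n) = [[z, Q(n)], [R(n), z⁻¹]]` of the four-potential
Ablowitz–Ladik spectral matrix. -/
def ALU1 {F : Type*} [CommRing F] (z : Fˣ) (Q R : ℤ → F) (n : ℤ) :
    Matrix (Fin 2) (Fin 2) F :=
  !![(z : F), Q n; R n, (↑z⁻¹ : F)]

/-- Auxiliary split Lax representation of the first positive isospectral four-potential
Ablowitz–Ladik flow: the two auxiliary zero-curvature equations
`U¹_t = V̂¹·U¹ − U¹·V¹` and `U²_t = V¹(n+1)·U² − U²·V̂¹`, where the left-hand sides are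
the derivatives of `U¹(n)` and `U²(n)` under `Q_t = K¹₁`, `R_t = K¹₂`, `S_t = K¹₃`,
`T_t = K¹₄`. -/
theorem AL_split_lax_first {F : Type*} [CommRing F] [Invertible (2 : F)]
    (z : Fˣ) (Q R S T : ℤ → F) (n : ℤ) :
    (!![0, (1 - Q n * R n) * S n; -((1 - Q n * R n) * T (n - 1)), 0]
        = (fun k : ℤ => !![⅟(2 : F) * (z : F) ^ 2 - R k * S k, (z : F) * S k;
              (z : F) * R k, -(⅟(2 : F) * (z : F) ^ 2)]) n * ALU1 z Q R n
          - ALU1 z Q R n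
            * (fun k : ℤ => !![⅟(2 : F) * (z : F) ^ 2 - Q k * T (k - 1), (z : F) * Q k;
                (z : F) * T (k - 1), -(⅟(2 : F) * (z : F) ^ 2)]) n)
    ∧ (!![0, (1 - S n * T n) * Q (n + 1); -((1 - S n * T n) * R n), 0]
        = (fun k : ℤ => !![⅟(2 : F) * (z : F) ^ 2 - Q k * T (k - 1), (z : F) * Q k;
              (z : F) * T (k - 1), -(⅟(2 : F) * (z : F) ^ 2)]) (n + 1) * ALU1 z S T n
          - ALU1 z S T n
            * (fun k : ℤ => !![⅟(2 : F) * (z : F) ^ 2 - R k * S k, (z : F) * S k;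
                (z : F) * R k, -(⅟(2 : F) * (z : F) ^ 2)]) n) := by
  have hz : (z:F) * (↑z⁻¹:F) = 1 := by
    rw [← Units.val_mul, mul_inv_cancel, Units.val_one]
  have h2 : ⅟(2:F) * 2 = 1 := invOf_mul_self 2
  have h1 : n + 1 - 1 = n := by ring
  constructor <;>
  · ext i j
    fin_cases i <;> fin_cases j <;>
      simp [ALU1, Matrix.mul_apply, Fin.sum_univ_two, h1] <;>
      first
        | ring1
        | linear_combination (R n * (z:F)^2) * h2
        | linear_combination (T n * (z:F)^2) * h2
        | linear_combination (-S n) * hz - Q n * (z:F)^2 * h2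
        | linear_combination (-Q (n+1)) * hz - S n * (z:F)^2 * h2
end

section
/- The first positive and first negative isospectral Ablowitz–Ladik flows commute: ⟦K¹, K⁻¹⟧(u)(n) = 0 for every u and every n ∈ ℤ; that is, (K¹)′(u)[K⁻¹(u)](n) = (K⁻¹)′(u)[K¹(u)](n), where both Gateaux derivatives exist. -/
/-- A quadruple of real sequences `u = (Q, R, S, T)`. -/
abbrev ALQuad : Type := (ℤ → ℝ) × (ℤ → ℝ) × (ℤ → ℝ) × (ℤ → ℝ)

/-- Evaluation of a quadruple of sequences at `n`, as a vector in `ℝ⁴`. -/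
def evalQ (u : ALQuad) (n : ℤ) : ℝ × ℝ × ℝ × ℝ :=
  (u.1 n, u.2.1 n, u.2.2.1 n, u.2.2.2 n)

/-- The zeroth isospectral four-potential Ablowitz–Ladik flow `K⁰`. -/
def K0 (u : ALQuad) : ALQuad :=
  (fun n => u.1 n, fun n => -u.2.1 n, fun n => u.2.2.1 n, fun n => -u.2.2.2 n)

/-- The first positive isospectral four-potential Ablowitz–Ladik flow `K¹`. -/
def K1 (u : ALQuad) : ALQuad :=
  (fun n => (1 - u.1 n * u.2.1 n) * u.2.2.1 n,
   fun n => -((1 - u.1 n * u.2.1 n) * u.2.2.2 (n - 1)),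
   fun n => (1 - u.2.2.1 n * u.2.2.2 n) * u.1 (n + 1),
   fun n => -((1 - u.2.2.1 n * u.2.2.2 n) * u.2.1 n))

/-- The first negative isospectral four-potential Ablowitz–Ladik flow `K⁻¹`. -/
def Kneg1 (u : ALQuad) : ALQuad :=
  (fun n => (1 - u.1 n * u.2.1 n) * u.2.2.1 (n - 1),
   fun n => -((1 - u.1 n * u.2.1 n) * u.2.2.2 n),
   fun n => (1 - u.2.2.1 n * u.2.2.2 n) * u.1 n,
   fun n => -((1 - u.2.2.1 n * u.2.2.2 n) * u.2.1 (n + 1)))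

/-- The zeroth non-isospectral four-potential Ablowitz–Ladik flow `σ⁰`. -/
noncomputable def sigma0 (u : ALQuad) : ALQuad :=
  (fun n => (2 * (n : ℝ) + 1 / 2) * u.1 n,
   fun n => -((2 * (n : ℝ) + 1 / 2) * u.2.1 n),
   fun n => (2 * (n : ℝ) + 3 / 2) * u.2.2.1 n,
   fun n => -((2 * (n : ℝ) + 3 / 2) * u.2.2.2 n))


lemma keyAL (a b c a' b' c' : ℝ) :
    HasDerivAt (fun ε : ℝ => (1 - (a + ε * a') * (b + ε * b')) * (c + ε * c'))
      (-(a' * b + a * b') * c + (1 - a * b) * c') 0 := by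
  have ha : HasDerivAt (fun ε : ℝ => a + ε * a') a' 0 := by
    simpa using (((hasDerivAt_id (0:ℝ)).mul_const a').const_add a)
  have hb : HasDerivAt (fun ε : ℝ => b + ε * b') b' 0 := by
    simpa using (((hasDerivAt_id (0:ℝ)).mul_const b').const_add b)
  have hc : HasDerivAt (fun ε : ℝ => c + ε * c') c' 0 := by
    simpa using (((hasDerivAt_id (0:ℝ)).mul_const c').const_add c)
  have h := ((ha.mul hb).const_sub 1).mul hc
  refine h.congr_deriv ?_
  simp

lemma K1deriv (u v : ALQuad) (n : ℤ) :
    HasDerivAt (fun ε : ℝ => evalQ (K1 (u + ε • v)) n)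
      ( -(v.1 n * u.2.1 n + u.1 n * v.2.1 n) * u.2.2.1 n + (1 - u.1 n * u.2.1 n) * v.2.2.1 n,
        -(-(v.1 n * u.2.1 n + u.1 n * v.2.1 n) * u.2.2.2 (n-1) + (1 - u.1 n * u.2.1 n) * v.2.2.2 (n-1)),
        -(v.2.2.1 n * u.2.2.2 n + u.2.2.1 n * v.2.2.2 n) * u.1 (n+1) + (1 - u.2.2.1 n * u.2.2.2 n) * v.1 (n+1),
        -(-(v.2.2.1 n * u.2.2.2 n + u.2.2.1 n * v.2.2.2 n) * u.2.1 n + (1 - u.2.2.1 n * u.2.2.2 n) * v.2.1 n) ) 0 := by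
  exact (keyAL (u.1 n) (u.2.1 n) (u.2.2.1 n) (v.1 n) (v.2.1 n) (v.2.2.1 n)).prodMk
    (((keyAL (u.1 n) (u.2.1 n) (u.2.2.2 (n-1)) (v.1 n) (v.2.1 n) (v.2.2.2 (n-1))).neg).prodMk
      ((keyAL (u.2.2.1 n) (u.2.2.2 n) (u.1 (n+1)) (v.2.2.1 n) (v.2.2.2 n) (v.1 (n+1))).prodMk
        ((keyAL (u.2.2.1 n) (u.2.2.2 n) (u.2.1 n) (v.2.2.1 n) (v.2.2.2 n) (v.2.1 n)).neg)))

lemma Kneg1deriv (u v : ALQuad) (n : ℤ) :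
    HasDerivAt (fun ε : ℝ => evalQ (Kneg1 (u + ε • v)) n)
      ( -(v.1 n * u.2.1 n + u.1 n * v.2.1 n) * u.2.2.1 (n-1) + (1 - u.1 n * u.2.1 n) * v.2.2.1 (n-1),
        -(-(v.1 n * u.2.1 n + u.1 n * v.2.1 n) * u.2.2.2 n + (1 - u.1 n * u.2.1 n) * v.2.2.2 n),
        -(v.2.2.1 n * u.2.2.2 n + u.2.2.1 n * v.2.2.2 n) * u.1 n + (1 - u.2.2.1 n * u.2.2.2 n) * v.1 n,
        -(-(v.2.2.1 n * u.2.2.2 n + u.2.2.1 n * v.2.2.2 n) * u.2.1 (n+1) + (1 - u.2.2.1 n * u.2.2.2 n) * v.2.1 (n+1)) ) 0 := by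
  exact (keyAL (u.1 n) (u.2.1 n) (u.2.2.1 (n-1)) (v.1 n) (v.2.1 n) (v.2.2.1 (n-1))).prodMk
    (((keyAL (u.1 n) (u.2.1 n) (u.2.2.2 n) (v.1 n) (v.2.1 n) (v.2.2.2 n)).neg).prodMk
      ((keyAL (u.2.2.1 n) (u.2.2.2 n) (u.1 n) (v.2.2.1 n) (v.2.2.2 n) (v.1 n)).prodMk
        ((keyAL (u.2.2.1 n) (u.2.2.2 n) (u.2.1 (n+1)) (v.2.2.1 n) (v.2.2.2 n) (v.2.1 (n+1))).neg)))

/-- The first positive and first negative isospectral Ablowitz–Ladik flows commute: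
both Gateaux derivatives `(K¹)′(u)[K⁻¹(u)](n)` and `(K⁻¹)′(u)[K¹(u)](n)` exist and are
equal, i.e. `⟦K¹, K⁻¹⟧(u)(n) = 0`. -/
theorem AL_flows_K1_Kneg1_commute (u : ALQuad) (n : ℤ) :
    ∃ d : ℝ × ℝ × ℝ × ℝ,
      HasDerivAt (fun ε : ℝ => evalQ (K1 (u + ε • Kneg1 u)) n) d 0 ∧
      HasDerivAt (fun ε : ℝ => evalQ (Kneg1 (u + ε • K1 u)) n) d 0 := by
  refine ⟨_, K1deriv u (Kneg1 u) n, ?_⟩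
  convert Kneg1deriv u (K1 u) n using 1
  simp only [K1, Kneg1, Prod.mk.injEq]
  refine ⟨by ring_nf, by ring_nf, by ring_nf, by ring_nf⟩
end

section
/- The first positive isospectral Ablowitz–Ladik flow and the zeroth non-isospectral flow satisfy ⟦K¹, σ⁰⟧(u)(n) = K¹(u)(n) for every u and every n ∈ ℤ; that is, (K¹)′(u)[σ⁰(u)](n) − (σ⁰)′(u)[K¹(u)](n) = K¹(u)(n), where both Gateaux derivatives exist. -/
lemma hlin (q a : ℝ) : HasDerivAt (fun ε : ℝ => q + ε * a) a 0 := by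
  simpa using ((hasDerivAt_id (0 : ℝ)).mul_const a).const_add q

lemma hcube (q r s a b c : ℝ) :
    HasDerivAt (fun ε : ℝ => (1 - (q + ε * a) * (r + ε * b)) * (s + ε * c))
      (-(a * r + q * b) * s + (1 - q * r) * c) 0 := by
  have h := (((hlin q a).mul (hlin r b)).const_sub 1).mul (hlin s c)
  simp only [zero_mul, add_zero, Pi.mul_def] at h
  convert h using 1

lemma hmul (c q a : ℝ) : HasDerivAt (fun ε : ℝ => c * (q + ε * a)) (c * a) 0 :=
  (hlin q a).const_mul c

/-- `⟦K¹, σ⁰⟧(u)(n) = K¹(u)(n)`: both Gateaux derivatives `(K¹)′(u)[σ⁰(u)](n)` and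
`(σ⁰)′(u)[K¹(u)](n)` exist, and their difference equals `K¹(u)(n)`. -/
theorem AL_bracket_K1_sigma0 (u : ALQuad) (n : ℤ) :
    ∃ d₁ d₂ : ℝ × ℝ × ℝ × ℝ,
      HasDerivAt (fun ε : ℝ => evalQ (K1 (u + ε • sigma0 u)) n) d₁ 0 ∧
      HasDerivAt (fun ε : ℝ => evalQ (sigma0 (u + ε • K1 u)) n) d₂ 0 ∧
      d₁ - d₂ = evalQ (K1 u) n := by
  have h1 : HasDerivAt (fun ε : ℝ => evalQ (K1 (u + ε • sigma0 u)) n)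
      (-(((2 * (n : ℝ) + 1 / 2) * u.1 (n)) * u.2.1 n + u.1 n * (-((2 * (n : ℝ) + 1 / 2) * u.2.1 (n)))) * u.2.2.1 n + (1 - u.1 n * u.2.1 n) * ((2 * (n : ℝ) + 3 / 2) * u.2.2.1 (n)),
       -(-(((2 * (n : ℝ) + 1 / 2) * u.1 (n)) * u.2.1 n + u.1 n * (-((2 * (n : ℝ) + 1 / 2) * u.2.1 (n)))) * u.2.2.2 (n - 1) + (1 - u.1 n * u.2.1 n) * (-((2 * ((n - 1 : ℤ) : ℝ) + 3 / 2) * u.2.2.2 (n - 1)))),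
       -(((2 * (n : ℝ) + 3 / 2) * u.2.2.1 (n)) * u.2.2.2 n + u.2.2.1 n * (-((2 * (n : ℝ) + 3 / 2) * u.2.2.2 (n)))) * u.1 (n + 1) + (1 - u.2.2.1 n * u.2.2.2 n) * ((2 * ((n + 1 : ℤ) : ℝ) + 1 / 2) * u.1 (n + 1)),
       -(-(((2 * (n : ℝ) + 3 / 2) * u.2.2.1 (n)) * u.2.2.2 n + u.2.2.1 n * (-((2 * (n : ℝ) + 3 / 2) * u.2.2.2 (n)))) * u.2.1 n + (1 - u.2.2.1 n * u.2.2.2 n) * (-((2 * (n : ℝ) + 1 / 2) * u.2.1 (n))))) 0 := by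
    simp only [evalQ, K1, sigma0, Prod.fst_add, Prod.snd_add, Prod.smul_fst, Prod.smul_snd,
      Pi.add_apply, Pi.smul_apply, smul_eq_mul]
    exact (hcube _ _ _ _ _ _).prodMk ((hcube _ _ _ _ _ _).neg.prodMk
      ((hcube _ _ _ _ _ _).prodMk (hcube _ _ _ _ _ _).neg))
  have h2 : HasDerivAt (fun ε : ℝ => evalQ (sigma0 (u + ε • K1 u)) n)
      ((2 * (n : ℝ) + 1 / 2) * ((1 - u.1 n * u.2.1 n) * u.2.2.1 n),
       -((2 * (n : ℝ) + 1 / 2) * (-((1 - u.1 n * u.2.1 n) * u.2.2.2 (n - 1)))),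
       (2 * (n : ℝ) + 3 / 2) * ((1 - u.2.2.1 n * u.2.2.2 n) * u.1 (n + 1)),
       -((2 * (n : ℝ) + 3 / 2) * (-((1 - u.2.2.1 n * u.2.2.2 n) * u.2.1 n)))) 0 := by
    simp only [evalQ, K1, sigma0, Prod.fst_add, Prod.snd_add, Prod.smul_fst, Prod.smul_snd,
      Pi.add_apply, Pi.smul_apply, smul_eq_mul]
    exact (hmul _ _ _).prodMk ((hmul _ _ _).neg.prodMk ((hmul _ _ _).prodMk (hmul _ _ _).neg))
  refine ⟨_, _, h1, h2, ?_⟩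
  simp only [evalQ, K1, Prod.mk_sub_mk, Prod.mk.injEq]
  refine ⟨by ring, by push_cast; ring, by push_cast; ring, by ring⟩
end

section
/- Generation of the flow algebra (equation (51)): every element K(m) and σ(m), m ∈ ℤ, belongs to the Lie subalgebra of g generated by the four elements σ(1), σ(2), σ(−2), K(1). -/
/-- If `k • x` lies in a Lie subalgebra over ℝ and `k ≠ 0`, then `x` does. -/
lemma AL_mem_of_zsmul_mem {g : Type*} [LieRing g] [LieAlgebra ℝ g]
    (S : LieSubalgebra ℝ g) {x : g} {k : ℤ} (hk : k ≠ 0)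
    (h : k • x ∈ S) : x ∈ S := by
  have hx : x = ((k : ℝ)⁻¹) • ((k : ℤ) • x) := by
    rw [← Int.cast_smul_eq_zsmul ℝ, smul_smul, inv_mul_cancel₀ (by exact_mod_cast hk),
      one_smul]
  rw [hx]
  exact S.smul_mem _ h

/-- Generation of the flow algebra (equation (51)): every `K(m)` and `σ(m)` lies in the
Lie subalgebra generated by `σ(1)`, `σ(2)`, `σ(−2)` and `K(1)`. -/
theorem AL_flow_algebra_generators {g : Type*} [LieRing g] [LieAlgebra ℝ g]
    (K σ : ℤ → g)
    (hKK : ∀ m s : ℤ, ⁅K m, K s⁆ = 0)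
    (hKσ : ∀ m s : ℤ, ⁅K m, σ s⁆ = m • K (m + s))
    (hσσ : ∀ m s : ℤ, ⁅σ m, σ s⁆ = (m - s) • σ (m + s)) :
    ∀ m : ℤ,
      K m ∈ LieSubalgebra.lieSpan ℝ g {σ 1, σ 2, σ (-2), K 1} ∧
      σ m ∈ LieSubalgebra.lieSpan ℝ g {σ 1, σ 2, σ (-2), K 1} := by
  set S := LieSubalgebra.lieSpan ℝ g {σ 1, σ 2, σ (-2), K 1} with hS
  have h1 : σ 1 ∈ S := LieSubalgebra.subset_lieSpan (by simp)
  have h2 : σ 2 ∈ S := LieSubalgebra.subset_lieSpan (by simp)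
  have hm2 : σ (-2) ∈ S := LieSubalgebra.subset_lieSpan (by simp)
  have hK1 : K 1 ∈ S := LieSubalgebra.subset_lieSpan (by simp)
  -- σ 0
  have h0 : σ 0 ∈ S := by
    refine AL_mem_of_zsmul_mem S (k := 4) (by norm_num) ?_
    have := hσσ 2 (-2)
    norm_num at this
    rw [← this]
    exact S.lie_mem h2 hm2
  -- positive σ
  have hpos : ∀ n : ℕ, σ ((n : ℤ) + 1) ∈ S := by
    intro n
    induction n with
    | zero => simpa using h1
    | succ n ih =>
      match n, ih with
      | 0, _ => simpa using h2
      | (n+1), ih =>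
        refine AL_mem_of_zsmul_mem S (k := (n : ℤ) + 1) (by positivity) ?_
        have := hσσ ((n : ℤ) + 1 + 1) 1
        have h' : ((n : ℤ) + 1 + 1 - 1) = (n : ℤ) + 1 := by ring
        rw [h'] at this
        have h'' : ((n : ℤ) + 1 + 1 + 1) = ((n : ℤ) + 1) + 1 + 1 := by ring
        rw [h''] at this
        push_cast
        rw [← this]
        exact S.lie_mem (by push_cast at ih; exact ih) h1
  -- σ (-1)
  have hneg1 : σ (-1) ∈ S := by
    refine AL_mem_of_zsmul_mem S (k := -3) (by norm_num) ?_
    have := hσσ (-2) 1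
    norm_num at this
    rw [show ((-3:ℤ)) • σ (-1) = -((3:ℤ) • σ (-1)) from neg_smul 3 (σ (-1)), ← this]
    exact S.lie_mem hm2 h1
  -- negative σ
  have hneg : ∀ n : ℕ, σ (-((n : ℤ) + 1)) ∈ S := by
    intro n
    induction n with
    | zero => simpa using hneg1
    | succ n ih =>
      match n, ih with
      | 0, _ => simpa using hm2
      | (n+1), ih =>
        refine AL_mem_of_zsmul_mem S (k := (n : ℤ) + 1) (by positivity) ?_
        have := hσσ (-1) (-((n : ℤ) + 1 + 1))
        have h' : ((-1 : ℤ) - -((n : ℤ) + 1 + 1)) = (n : ℤ) + 1 := by ring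
        have h'' : ((-1 : ℤ) + -((n : ℤ) + 1 + 1)) = -((n : ℤ) + 1 + 1 + 1) := by ring
        rw [h', h''] at this
        push_cast
        rw [← this]
        exact S.lie_mem hneg1 (by push_cast at ih; exact ih)
  -- all σ
  have hσall : ∀ m : ℤ, σ m ∈ S := by
    intro m
    obtain ⟨n, rfl | rfl⟩ := m.eq_nat_or_neg
    · match n with
      | 0 => simpa using h0
      | (n+1) => have := hpos n; push_cast at this ⊢; exact this
    · match n with
      | 0 => simpa using h0
      | (n+1) => have := hneg n; push_cast at this ⊢; exact this
  intro m
  refine ⟨?_, hσall m⟩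
  have := hKσ 1 (m - 1)
  norm_num at this
  rw [← this]
  exact S.lie_mem hK1 (hσall _)
end

section
/- Generation of the symmetry algebra of the isospectral hierarchy (equation (52)): fix m ∈ ℤ and t ∈ ℝ, and set τ(s) := (m·t) • K(m+s) + σ(s) for s ∈ ℤ. Then every element K(l), l ∈ ℤ, and every element τ(s), s ∈ ℤ, belongs to the Lie subalgebra of g generated by the four elements τ(1), τ(2), τ(−2), K(1). -/
/-- Generation of the symmetry algebra of the isospectral hierarchy (equation (52)):
with `τ(s) = (m·t) • K(m+s) + σ(s)`, every `K(l)` and every `τ(s)` lies in the Lie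
subalgebra generated by `τ(1)`, `τ(2)`, `τ(−2)` and `K(1)`. -/
theorem AL_isospectral_symmetry_generators {g : Type*} [LieRing g] [LieAlgebra ℝ g]
    (K σ : ℤ → g)
    (hKK : ∀ m s : ℤ, ⁅K m, K s⁆ = 0)
    (hKσ : ∀ m s : ℤ, ⁅K m, σ s⁆ = m • K (m + s))
    (hσσ : ∀ m s : ℤ, ⁅σ m, σ s⁆ = (m - s) • σ (m + s))
    (m : ℤ) (t : ℝ) (τ : ℤ → g)
    (hτ : ∀ s : ℤ, τ s = ((m : ℝ) * t) • K (m + s) + σ s) :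
    ∀ l s : ℤ,
      K l ∈ LieSubalgebra.lieSpan ℝ g {τ 1, τ 2, τ (-2), K 1} ∧
      τ s ∈ LieSubalgebra.lieSpan ℝ g {τ 1, τ 2, τ (-2), K 1} := by
  set S := LieSubalgebra.lieSpan ℝ g {τ 1, τ 2, τ (-2), K 1} with hS
  have hmem : ∀ x ∈ ({τ 1, τ 2, τ (-2), K 1} : Set g), x ∈ S :=
    fun x hx => LieSubalgebra.subset_lieSpan hx
  have h1 : τ 1 ∈ S := hmem _ (by simp)
  have h2 : τ 2 ∈ S := hmem _ (by simp)
  have hm2 : τ (-2) ∈ S := hmem _ (by simp)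
  have hK1 : K 1 ∈ S := hmem _ (by simp)
  have hdiv : ∀ (c : ℤ) (x : g), c ≠ 0 → c • x ∈ S → x ∈ S := by
    intro c x hc hx
    have h : ((c : ℝ)⁻¹ • (c • x)) ∈ S := S.smul_mem _ hx
    rwa [← Int.cast_smul_eq_zsmul ℝ, smul_smul,
      inv_mul_cancel₀ (by exact_mod_cast hc), one_smul] at h
  have hσK : ∀ a n : ℤ, ⁅σ a, K n⁆ = -(n • K (n + a)) := by
    intro a n; rw [← lie_skew, hKσ]
  have hττ : ∀ a b : ℤ, ⁅τ a, τ b⁆ = (a - b) • τ (a + b) := by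
    intro a b
    rw [hτ a, hτ b, hτ (a + b)]
    rw [add_lie, lie_add, lie_add, lie_smul, lie_smul, smul_lie, smul_lie,
      hKK, hKσ, hσK, hσσ]
    have e1 : m + a + b = m + (a + b) := by ring
    have e2 : m + b + a = m + (a + b) := by ring
    rw [e1, e2]
    rw [← Int.cast_smul_eq_zsmul ℝ (m + a), ← Int.cast_smul_eq_zsmul ℝ (m + b),
      ← Int.cast_smul_eq_zsmul ℝ (a - b), ← Int.cast_smul_eq_zsmul ℝ (a - b)]
    push_cast
    match_scalars <;> ring
  have hKτ : ∀ l s : ℤ, ⁅K l, τ s⁆ = l • K (l + s) := by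
    intro l s
    rw [hτ s, lie_add, lie_smul, hKK, smul_zero, zero_add, hKσ]
  have hτmem : ∀ s : ℤ, τ s ∈ S := by
    have hm1 : τ (-1) ∈ S := by
      apply hdiv 3 _ (by norm_num)
      have := hττ 1 (-2)
      norm_num at this
      rw [← this]; exact S.lie_mem h1 hm2
    have h0 : τ 0 ∈ S := by
      apply hdiv 4 _ (by norm_num)
      have := hττ 2 (-2)
      norm_num at this
      rw [← this]; exact S.lie_mem h2 hm2
    intro s
    induction s using Int.induction_on with
    | zero => exact h0
    | succ n ih =>
      rcases eq_or_ne (n : ℤ) 1 with h | h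
      · rw [h]; exact h2
      · apply hdiv ((n : ℤ) - 1) _ (by omega)
        rw [← hττ n 1]; exact S.lie_mem ih h1
    | pred n ih =>
      rcases eq_or_ne (n : ℤ) 1 with h | h
      · rw [h]; norm_num; exact hm2
      · rcases eq_or_ne (n : ℤ) 0 with h0' | h0'
        · rw [h0']; norm_num; exact hm1
        · apply hdiv (-(n : ℤ) + 1) _ (by omega)
          have := hττ (-n) (-1)
          have e : (-(n:ℤ)) + (-1) = -(n:ℤ) - 1 := by ring
          have e2 : (-(n:ℤ)) - (-1) = -(n:ℤ) + 1 := by ring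
          rw [e, e2] at this
          rw [← this]; exact S.lie_mem ih hm1
  intro l s
  refine ⟨?_, hτmem s⟩
  have : ⁅K 1, τ (l - 1)⁆ = K l := by
    rw [hKτ]; simp
  rw [← this]
  exact S.lie_mem hK1 (hτmem (l - 1))
end

section
/- Symmetry condition for the η-symmetries of the non-isospectral Ablowitz–Ladik hierarchy (Theorem 4.2): for every m ∈ ℤ, every s ∈ ℕ and every t ∈ ℝ, Σ_{j=0}^{s−1} C(s,j)·(s−j)·m·(m·t)^{s−j−1} • σ(m − j·m) = ⁅σ(m), Σ_{j=0}^{s} C(s,j)·(m·t)^{s−j} • σ(m − j·m)⁆, where C(s,j) is the binomial coefficient. In other words, the explicit t-derivative of η_{m,s}(t) := Σ_{j=0}^{s} C(s,j)·(m·t)^{s−j} • σ(m − j·m) equals its bracket with the flow σ(m), so each η_{m,s} is a symmetry of the m-th non-isospectral equation. -/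
open Finset


lemma my_lie_sum {g : Type*} [LieRing g] {ι : Type*} (x : g) (s : Finset ι) (f : ι → g) :
    ⁅x, ∑ i ∈ s, f i⁆ = ∑ i ∈ s, ⁅x, f i⁆ := by
  classical
  induction s using Finset.induction with
  | empty => simp
  | insert _ _ h ih => simp [Finset.sum_insert h, lie_add, ih]

/-- Symmetry condition for the η-symmetries of the non-isospectral Ablowitz–Ladik
hierarchy (Theorem 4.2): the explicit `t`-derivative of
`η_{m,s}(t) = Σ_{j=0}^{s} C(s,j)·(m·t)^{s−j} • σ(m − j·m)` equals its bracket with the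
flow `σ(m)`. -/
theorem AL_eta_symmetry_condition {g : Type*} [LieRing g] [LieAlgebra ℝ g]
    (K σ : ℤ → g)
    (hKK : ∀ m s : ℤ, ⁅K m, K s⁆ = 0)
    (hKσ : ∀ m s : ℤ, ⁅K m, σ s⁆ = m • K (m + s))
    (hσσ : ∀ m s : ℤ, ⁅σ m, σ s⁆ = (m - s) • σ (m + s)) :
    ∀ (m : ℤ) (s : ℕ) (t : ℝ),
      ∑ j ∈ Finset.range s,
          ((s.choose j : ℝ) * ((s - j : ℕ) : ℝ) * (m : ℝ) * ((m : ℝ) * t) ^ (s - j - 1))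
            • σ (m - (j : ℤ) * m)
        = ⁅σ m, ∑ j ∈ Finset.range (s + 1),
            ((s.choose j : ℝ) * ((m : ℝ) * t) ^ (s - j)) • σ (m - (j : ℤ) * m)⁆ := by
  intro m s t
  rw [my_lie_sum]
  simp_rw [lie_smul, hσσ]
  rw [Finset.sum_range_succ']
  have h0 : ((s.choose 0 : ℝ) * ((m : ℝ) * t) ^ (s - 0)) •
      ((m - (m - (0 : ℕ) * m)) • σ (m + (m - (0 : ℕ) * m))) = 0 := by
    norm_num
  rw [h0, add_zero]
  refine Finset.sum_congr rfl fun j hj => ?_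
  rw [Finset.mem_range] at hj
  have hidx : m + (m - ((j + 1 : ℕ) : ℤ) * m) = m - (j : ℤ) * m := by push_cast; ring
  have hco : m - (m - ((j + 1 : ℕ) : ℤ) * m) = ((j : ℤ) + 1) * m := by push_cast; ring
  rw [hidx, hco, ← Int.cast_smul_eq_zsmul ℝ, smul_smul]
  congr 1
  have hch : (s.choose (j + 1) : ℝ) * ((j : ℝ) + 1) = (s.choose j : ℝ) * ((s : ℝ) - j) := by
    have hc := congrArg (Nat.cast (R := ℝ)) (Nat.choose_succ_right_eq s j)
    push_cast [Nat.cast_sub hj.le] at hc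
    linarith [hc]
  have hsub : ((s - j : ℕ) : ℝ) = (s : ℝ) - j := by push_cast [Nat.cast_sub hj.le]; ring
  have hpow : s - (j + 1) = s - j - 1 := by omega
  rw [hsub, hpow]
  push_cast
  linear_combination ((m : ℝ) * ((m : ℝ) * t) ^ (s - j - 1)) * hch.symm
end

section
/- Symmetry condition for the γ-symmetries of the non-isospectral Ablowitz–Ladik hierarchy (Theorem 4.2): for every m ∈ ℤ, every s ∈ ℕ and every t ∈ ℝ, Σ_{j=0}^{s−1} C(s,j)·(s−j)·m·(m·t)^{s−j−1} • K(−j·m) = ⁅σ(m), Σ_{j=0}^{s} C(s,j)·(m·t)^{s−j} • K(−j·m)⁆, where C(s,j) is the binomial coefficient. In other words, the explicit t-derivative of γ_{m,s}(t) := Σ_{j=0}^{s} C(s,j)·(m·t)^{s−j} • K(−j·m) equals its bracket with the flow σ(m), so each γ_{m,s} is a symmetry of the m-th non-isospectral equation. -/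
open Finset

private lemma lie_sum' {g : Type*} [LieRing g] (x : g) {ι : Type*} (s : Finset ι) (f : ι → g) :
    ⁅x, ∑ i ∈ s, f i⁆ = ∑ i ∈ s, ⁅x, f i⁆ := by
  classical
  induction s using Finset.induction with
  | empty => simp
  | insert _ _ h ih => simp [Finset.sum_insert h, lie_add, ih]

/-- Symmetry condition for the γ-symmetries of the non-isospectral Ablowitz–Ladik
hierarchy (Theorem 4.2): the explicit `t`-derivative of
`γ_{m,s}(t) = Σ_{j=0}^{s} C(s,j)·(m·t)^{s−j} • K(−j·m)` equals its bracket with the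
flow `σ(m)`. -/
theorem AL_gamma_symmetry_condition {g : Type*} [LieRing g] [LieAlgebra ℝ g]
    (K σ : ℤ → g)
    (hKK : ∀ m s : ℤ, ⁅K m, K s⁆ = 0)
    (hKσ : ∀ m s : ℤ, ⁅K m, σ s⁆ = m • K (m + s))
    (hσσ : ∀ m s : ℤ, ⁅σ m, σ s⁆ = (m - s) • σ (m + s)) :
    ∀ (m : ℤ) (s : ℕ) (t : ℝ),
      ∑ j ∈ Finset.range s,
          ((s.choose j : ℝ) * ((s - j : ℕ) : ℝ) * (m : ℝ) * ((m : ℝ) * t) ^ (s - j - 1))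
            • K (-(j : ℤ) * m)
        = ⁅σ m, ∑ j ∈ Finset.range (s + 1),
            ((s.choose j : ℝ) * ((m : ℝ) * t) ^ (s - j)) • K (-(j : ℤ) * m)⁆ := by
  intro m s t
  rw [lie_sum', Finset.sum_range_succ']
  have h0 : ⁅σ m, ((s.choose 0 : ℝ) * ((m:ℝ)*t)^(s-0)) • K (-((0:ℕ):ℤ)*m)⁆ = 0 := by
    rw [lie_smul, ← lie_skew, hKσ]
    norm_num
  rw [h0, add_zero]
  apply Finset.sum_congr rfl
  intro j hj
  rw [lie_smul, ← lie_skew, hKσ]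
  have harg : -((j:ℤ)+1)*m + m = -(j:ℤ)*m := by ring
  push_cast
  rw [harg, ← Int.cast_smul_eq_zsmul ℝ, smul_neg, smul_smul, ← neg_smul]
  congr 1
  have hj' : j ≤ s := le_of_lt (Finset.mem_range.mp hj)
  have hc : (s.choose (j+1) : ℝ) * ((j:ℝ)+1) = (s.choose j : ℝ) * ((s:ℝ) - (j:ℝ)) := by
    have h := Nat.choose_succ_right_eq s j
    have h2 : ((s.choose (j+1)) : ℝ) * ((j:ℝ)+1) = (s.choose j : ℝ) * ((s - j : ℕ) : ℝ) := by
      exact_mod_cast congrArg (Nat.cast : ℕ → ℝ) h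
    rw [Nat.cast_sub hj'] at h2
    exact h2
  have hsj : ((s - j : ℕ) : ℝ) = (s:ℝ) - (j:ℝ) := Nat.cast_sub hj'
  have hexp : s - (j+1) = s - j - 1 := by omega
  rw [hexp, hsj]
  push_cast
  linear_combination -((m:ℝ) * ((m:ℝ) * t) ^ (s - j - 1)) * hc
end

section
/- Generation of the symmetry algebra of the non-isospectral hierarchy (equation (61)): fix m ∈ ℤ with m ≠ 0 and t ∈ ℝ, and for s ∈ ℕ set η(s) := Σ_{j=0}^{s} C(s,j)·(m·t)^{s−j} • σ(m − j·m) and γ(s) := Σ_{j=0}^{s} C(s,j)·(m·t)^{s−j} • K(−j·m), where C(s,j) is the binomial coefficient. Then every element η(s) and γ(s), s ∈ ℕ, belongs to the Lie subalgebra of g generated by the three elements η(0), η(3), γ(1). -/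
open Finset

private lemma AL_sum_lie {g : Type*} [LieRing g] {ι : Type*} (s : Finset ι) (f : ι → g) (y : g) :
    ⁅∑ i ∈ s, f i, y⁆ = ∑ i ∈ s, ⁅f i, y⁆ := by
  induction s using Finset.cons_induction with
  | empty => simp
  | cons a s ha ih => simp [Finset.sum_cons, add_lie, ih]

private lemma AL_lie_sum {g : Type*} [LieRing g] {ι : Type*} (s : Finset ι) (f : ι → g) (y : g) :
    ⁅y, ∑ i ∈ s, f i⁆ = ∑ i ∈ s, ⁅y, f i⁆ := by
  induction s using Finset.cons_induction with
  | empty => simp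
  | cons a s ha ih => simp [Finset.sum_cons, lie_add, ih]

private lemma AL_aux1 (a b l : ℕ) :
    ∑ p ∈ Finset.HasAntidiagonal.antidiagonal (l + 1), (a.choose p.1 : ℝ) * (b.choose p.2 : ℝ) * (p.2 : ℝ)
      = (b : ℝ) * ((a + b - 1).choose l : ℝ) := by
  cases b with
  | zero =>
    rw [Nat.cast_zero, zero_mul]
    refine Finset.sum_eq_zero fun p _ => ?_
    rcases Nat.eq_zero_or_pos p.2 with h | h
    · simp [h]
    · simp [Nat.choose_eq_zero_of_lt h]
  | succ n =>
    rw [Finset.Nat.sum_antidiagonal_succ']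
    simp only [Nat.cast_zero, mul_zero, zero_add]
    have key : ∀ p : ℕ × ℕ,
        (a.choose p.1 : ℝ) * ((n + 1).choose (p.2 + 1) : ℝ) * ((p.2 : ℝ) + 1)
          = ((n : ℝ) + 1) * ((a.choose p.1 : ℝ) * (n.choose p.2 : ℝ)) := by
      intro p
      have h := Nat.add_one_mul_choose_eq n p.2
      have h2 : ((n : ℝ) + 1) * (n.choose p.2 : ℝ) = ((n + 1).choose (p.2 + 1) : ℝ) * ((p.2 : ℝ) + 1) := by
        exact_mod_cast congrArg (fun x : ℕ => (x : ℝ)) h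
      linear_combination (-(a.choose p.1 : ℝ)) * h2
    have hv : ∑ p ∈ Finset.HasAntidiagonal.antidiagonal l, (a.choose p.1 : ℝ) * (n.choose p.2 : ℝ)
        = ((a + n).choose l : ℝ) := by
      rw [Nat.add_choose_eq]
      push_cast
      rfl
    calc ∑ p ∈ Finset.HasAntidiagonal.antidiagonal l,
          (a.choose p.1 : ℝ) * ((n + 1).choose (p.2 + 1) : ℝ) * ((p.2 + 1 : ℕ) : ℝ)
        = ∑ p ∈ Finset.HasAntidiagonal.antidiagonal l,
            ((n : ℝ) + 1) * ((a.choose p.1 : ℝ) * (n.choose p.2 : ℝ)) := by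
          refine Finset.sum_congr rfl fun p _ => ?_
          push_cast
          exact key p
      _ = ((n : ℝ) + 1) * ((a + n).choose l : ℝ) := by rw [← Finset.mul_sum, hv]
      _ = ((n + 1 : ℕ) : ℝ) * ((a + (n + 1) - 1).choose l : ℝ) := by
          have : a + (n + 1) - 1 = a + n := by omega
          rw [this]
          push_cast
          ring

private lemma AL_aux2 (a b l : ℕ) :
    ∑ p ∈ Finset.HasAntidiagonal.antidiagonal (l + 1),
      (a.choose p.1 : ℝ) * (b.choose p.2 : ℝ) * ((p.2 : ℝ) - (p.1 : ℝ))
      = ((b : ℝ) - (a : ℝ)) * ((a + b - 1).choose l : ℝ) := by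
  have h1 := AL_aux1 a b l
  have h2 := AL_aux1 b a l
  have h2' : ∑ p ∈ Finset.HasAntidiagonal.antidiagonal (l + 1),
      (b.choose p.2 : ℝ) * (a.choose p.1 : ℝ) * (p.1 : ℝ)
      = (a : ℝ) * ((b + a - 1).choose l : ℝ) :=
    (Finset.Nat.sum_antidiagonal_swap
      (f := fun p => (b.choose p.1 : ℝ) * (a.choose p.2 : ℝ) * (p.2 : ℝ))).trans h2
  have e : b + a - 1 = a + b - 1 := by omega
  rw [e] at h2'
  calc ∑ p ∈ Finset.HasAntidiagonal.antidiagonal (l + 1),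
        (a.choose p.1 : ℝ) * (b.choose p.2 : ℝ) * ((p.2 : ℝ) - (p.1 : ℝ))
      = ∑ p ∈ Finset.HasAntidiagonal.antidiagonal (l + 1),
          ((a.choose p.1 : ℝ) * (b.choose p.2 : ℝ) * (p.2 : ℝ)
            - (b.choose p.2 : ℝ) * (a.choose p.1 : ℝ) * (p.1 : ℝ)) := by
        refine Finset.sum_congr rfl fun p _ => ?_
        ring
    _ = ((b : ℝ) - (a : ℝ)) * ((a + b - 1).choose l : ℝ) := by
        rw [Finset.sum_sub_distrib, h1, h2']
        ring

private lemma AL_hee {g : Type*} [LieRing g] [LieAlgebra ℝ g]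
    (σ : ℤ → g)
    (hσσ : ∀ m s : ℤ, ⁅σ m, σ s⁆ = (m - s) • σ (m + s))
    (m : ℤ) (t : ℝ) (η : ℕ → g)
    (hη : ∀ s : ℕ, η s = ∑ j ∈ Finset.range (s + 1),
        ((s.choose j : ℝ) * ((m : ℝ) * t) ^ (s - j)) • σ (m - (j : ℤ) * m)) : ∀ a b : ℕ, ⁅η a, η b⁆ = ((m : ℝ) * ((b : ℝ) - (a : ℝ))) • η (a + b - 1) := by
  set c : ℝ := (m : ℝ) * t with hc
  have hx : ∀ j k : ℕ, ⁅σ (m - (j : ℤ) * m), σ (m - (k : ℤ) * m)⁆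
      = (((k : ℝ) - (j : ℝ)) * (m : ℝ)) • σ (2 * m - ((j + k : ℕ) : ℤ) * m) := by
    intro j k
    have h1 : (m - (j : ℤ) * m) + (m - (k : ℤ) * m) = 2 * m - ((j + k : ℕ) : ℤ) * m := by
      push_cast; ring
    have h2 : (m - (j : ℤ) * m) - (m - (k : ℤ) * m) = ((k : ℤ) - (j : ℤ)) * m := by ring
    rw [hσσ, h2, h1, ← Int.cast_smul_eq_zsmul ℝ]
    push_cast
    ring_nf
  intro a b
  rcases Nat.eq_zero_or_pos (a + b) with hab | hab
  · obtain ⟨rfl, rfl⟩ : a = 0 ∧ b = 0 := by omega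
    simp
  have hab1 : a + b - 1 + 1 = a + b := by omega
  -- the coefficient function on pairs
  set F : ℕ × ℕ → ℝ := fun p =>
    ((a.choose p.1 : ℝ) * c ^ (a - p.1)) * ((b.choose p.2 : ℝ) * c ^ (b - p.2))
      * (((p.2 : ℝ) - (p.1 : ℝ)) * (m : ℝ)) with hF
  calc ⁅η a, η b⁆
      = ∑ j ∈ Finset.range (a + 1), ∑ k ∈ Finset.range (b + 1),
          F (j, k) • σ (2 * m - ((j + k : ℕ) : ℤ) * m) := by
        rw [hη a, hη b, AL_sum_lie]
        refine Finset.sum_congr rfl fun j _ => ?_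
        rw [AL_lie_sum]
        refine Finset.sum_congr rfl fun k _ => ?_
        rw [smul_lie, lie_smul, hx j k, smul_smul, smul_smul]
      _ = ∑ p ∈ Finset.range (a + 1) ×ˢ Finset.range (b + 1),
          F p • σ (2 * m - ((p.1 + p.2 : ℕ) : ℤ) * m) :=
        (Finset.sum_product' _ _ _).symm
      _ = ∑ n ∈ Finset.range (a + b + 1), ∑ p ∈ (Finset.range (a + 1) ×ˢ Finset.range (b + 1)).filter
            (fun p => p.1 + p.2 = n), F p • σ (2 * m - ((p.1 + p.2 : ℕ) : ℤ) * m) := by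
        refine (Finset.sum_fiberwise_of_maps_to (fun p hp => ?_) _).symm
        simp only [Finset.mem_product, Finset.mem_range] at hp ⊢
        omega
      _ = ∑ n ∈ Finset.range (a + b + 1), (∑ p ∈ (Finset.range (a + 1) ×ˢ Finset.range (b + 1)).filter
            (fun p => p.1 + p.2 = n), F p) • σ (2 * m - (n : ℤ) * m) := by
        refine Finset.sum_congr rfl fun n _ => ?_
        rw [Finset.sum_smul]
        refine Finset.sum_congr rfl fun p hp => ?_
        rw [(Finset.mem_filter.mp hp).2]
      _ = ((m : ℝ) * ((b : ℝ) - (a : ℝ))) • η (a + b - 1) := by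
        rw [Finset.sum_range_succ']
        have hzero : (∑ p ∈ (Finset.range (a + 1) ×ˢ Finset.range (b + 1)).filter
            (fun p => p.1 + p.2 = 0), F p) • σ (2 * m - ((0 : ℕ) : ℤ) * m) = 0 := by
          rw [Finset.sum_eq_zero, zero_smul]
          intro p hp
          have h2 := (Finset.mem_filter.mp hp).2
          obtain ⟨h3, h4⟩ : p.1 = 0 ∧ p.2 = 0 := by omega
          simp only [hF, h3, h4]
          norm_num
        rw [hzero, add_zero, hη (a + b - 1), hab1, Finset.smul_sum]
        refine Finset.sum_congr rfl fun l hl => ?_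
        have hl' : l < a + b := Finset.mem_range.mp hl
        have hidx : 2 * m - ((l + 1 : ℕ) : ℤ) * m = m - (l : ℤ) * m := by push_cast; ring
        rw [hidx, smul_smul]
        congr 1
        calc (∑ p ∈ (Finset.range (a + 1) ×ˢ Finset.range (b + 1)).filter
              (fun p => p.1 + p.2 = l + 1), F p)
            = ∑ p ∈ (Finset.range (a + 1) ×ˢ Finset.range (b + 1)).filter
              (fun p => p.1 + p.2 = l + 1),
                ((a.choose p.1 : ℝ) * (b.choose p.2 : ℝ) * ((p.2 : ℝ) - (p.1 : ℝ)))
                  * ((m : ℝ) * c ^ (a + b - 1 - l)) := by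
              refine Finset.sum_congr rfl fun p hp => ?_
              simp only [Finset.mem_filter, Finset.mem_product, Finset.mem_range] at hp
              have he : a - p.1 + (b - p.2) = a + b - 1 - l := by omega
              simp only [hF]
              rw [show ((a.choose p.1 : ℝ) * c ^ (a - p.1)) * ((b.choose p.2 : ℝ) * c ^ (b - p.2))
                  * (((p.2 : ℝ) - (p.1 : ℝ)) * (m : ℝ))
                  = ((a.choose p.1 : ℝ) * (b.choose p.2 : ℝ) * ((p.2 : ℝ) - (p.1 : ℝ)))
                    * ((m : ℝ) * (c ^ (a - p.1) * c ^ (b - p.2))) from by ring,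
                ← pow_add, he]
          _ = (∑ p ∈ (Finset.range (a + 1) ×ˢ Finset.range (b + 1)).filter
              (fun p => p.1 + p.2 = l + 1),
                (a.choose p.1 : ℝ) * (b.choose p.2 : ℝ) * ((p.2 : ℝ) - (p.1 : ℝ)))
                  * ((m : ℝ) * c ^ (a + b - 1 - l)) := by
              rw [Finset.sum_mul]
          _ = (∑ p ∈ Finset.HasAntidiagonal.antidiagonal (l + 1),
                (a.choose p.1 : ℝ) * (b.choose p.2 : ℝ) * ((p.2 : ℝ) - (p.1 : ℝ)))
                  * ((m : ℝ) * c ^ (a + b - 1 - l)) := by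
              congr 1
              refine Finset.sum_subset (fun p hp => ?_) (fun p hp hnp => ?_)
              · exact Finset.HasAntidiagonal.mem_antidiagonal.mpr (Finset.mem_filter.mp hp).2
              · have h1 := Finset.HasAntidiagonal.mem_antidiagonal.mp hp
                simp only [Finset.mem_filter, Finset.mem_product, Finset.mem_range] at hnp
                have : a < p.1 ∨ b < p.2 := by omega
                rcases this with h | h
                · simp [Nat.choose_eq_zero_of_lt h]
                · simp [Nat.choose_eq_zero_of_lt h]
          _ = ((m : ℝ) * ((b : ℝ) - (a : ℝ))) * ((((a + b - 1).choose l : ℝ))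
                * c ^ (a + b - 1 - l)) := by
              rw [AL_aux2]
              ring

private lemma AL_hge {g : Type*} [LieRing g] [LieAlgebra ℝ g]
    (K σ : ℤ → g)
    (hKσ : ∀ m s : ℤ, ⁅K m, σ s⁆ = m • K (m + s))
    (m : ℤ) (t : ℝ) (η γ : ℕ → g)
    (hη : ∀ s : ℕ, η s = ∑ j ∈ Finset.range (s + 1),
        ((s.choose j : ℝ) * ((m : ℝ) * t) ^ (s - j)) • σ (m - (j : ℤ) * m))
    (hγ : ∀ s : ℕ, γ s = ∑ j ∈ Finset.range (s + 1),
        ((s.choose j : ℝ) * ((m : ℝ) * t) ^ (s - j)) • K (-(j : ℤ) * m)) : ∀ b : ℕ, ⁅γ 1, η b⁆ = (-(m : ℝ)) • γ b := by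
  intro b
  have h0 : ∀ k : ℕ, ⁅K (-((0 : ℕ) : ℤ) * m), σ (m - (k : ℤ) * m)⁆ = 0 := by
    intro k
    rw [hKσ]
    norm_num
  have h1 : ∀ k : ℕ, ⁅K (-((1 : ℕ) : ℤ) * m), σ (m - (k : ℤ) * m)⁆
      = (-(m : ℝ)) • K (-(k : ℤ) * m) := by
    intro k
    rw [hKσ]
    have h2 : -((1 : ℕ) : ℤ) * m + (m - (k : ℤ) * m) = -(k : ℤ) * m := by push_cast; ring
    rw [h2, show (-((1 : ℕ) : ℤ) * m) = ((-m : ℤ)) from by push_cast; ring,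
      ← Int.cast_smul_eq_zsmul ℝ]
    push_cast
    rfl
  rw [hγ 1, hη b, hγ b, AL_sum_lie, Finset.sum_range_succ, Finset.sum_range_succ,
    Finset.sum_range_zero, zero_add, Finset.smul_sum]
  rw [smul_lie, smul_lie, AL_lie_sum, AL_lie_sum]
  simp only [lie_smul, h0, h1, smul_zero, Finset.sum_const_zero, smul_zero, zero_add]
  rw [Finset.smul_sum]
  refine Finset.sum_congr rfl fun k _ => ?_
  rw [smul_smul, smul_smul, smul_smul]
  congr 1
  norm_num
  ring


/-- Generation of the symmetry algebra of the non-isospectral hierarchy (equation (61)):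
for `m ≠ 0`, every `η(s)` and `γ(s)` lies in the Lie subalgebra generated by `η(0)`,
`η(3)` and `γ(1)`. -/
theorem AL_nonisospectral_symmetry_generators {g : Type*} [LieRing g] [LieAlgebra ℝ g]
    (K σ : ℤ → g)
    (hKK : ∀ m s : ℤ, ⁅K m, K s⁆ = 0)
    (hKσ : ∀ m s : ℤ, ⁅K m, σ s⁆ = m • K (m + s))
    (hσσ : ∀ m s : ℤ, ⁅σ m, σ s⁆ = (m - s) • σ (m + s))
    (m : ℤ) (hm : m ≠ 0) (t : ℝ) (η γ : ℕ → g)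
    (hη : ∀ s : ℕ, η s = ∑ j ∈ Finset.range (s + 1),
        ((s.choose j : ℝ) * ((m : ℝ) * t) ^ (s - j)) • σ (m - (j : ℤ) * m))
    (hγ : ∀ s : ℕ, γ s = ∑ j ∈ Finset.range (s + 1),
        ((s.choose j : ℝ) * ((m : ℝ) * t) ^ (s - j)) • K (-(j : ℤ) * m)) :
    ∀ s : ℕ,
      η s ∈ LieSubalgebra.lieSpan ℝ g {η 0, η 3, γ 1} ∧
      γ s ∈ LieSubalgebra.lieSpan ℝ g {η 0, η 3, γ 1} := by
  set S := LieSubalgebra.lieSpan ℝ g {η 0, η 3, γ 1} with hS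
  have hee := AL_hee σ hσσ m t η hη
  have hge := AL_hge K σ hKσ m t η γ hη hγ
  have hmR : (m : ℝ) ≠ 0 := Int.cast_ne_zero.mpr hm
  have hη0 : η 0 ∈ S := LieSubalgebra.subset_lieSpan (by simp)
  have hη3 : η 3 ∈ S := LieSubalgebra.subset_lieSpan (by simp)
  have hγ1 : γ 1 ∈ S := LieSubalgebra.subset_lieSpan (by simp)
  have hstep : ∀ (x y z : g) (r : ℝ), r ≠ 0 → x ∈ S → y ∈ S → ⁅x, y⁆ = r • z → z ∈ S := by
    intro x y z r hr hx hy hb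
    have hz : z = r⁻¹ • ⁅x, y⁆ := by
      rw [hb, smul_smul, inv_mul_cancel₀ hr, one_smul]
    rw [hz]
    exact S.smul_mem _ (S.lie_mem hx hy)
  have hη2 : η 2 ∈ S := by
    refine hstep (η 0) (η 3) (η 2) ((m : ℝ) * 3) (by simp [hmR]) hη0 hη3 ?_
    have h := hee 0 3
    norm_num at h
    exact h
  have hη1 : η 1 ∈ S := by
    refine hstep (η 0) (η 2) (η 1) ((m : ℝ) * 2) (by simp [hmR]) hη0 hη2 ?_
    have h := hee 0 2
    norm_num at h
    exact h
  have hup : ∀ n : ℕ, η (n + 3) ∈ S → η (n + 4) ∈ S := by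
    intro n hn
    refine hstep (η 2) (η (n + 3)) (η (n + 4)) ((m : ℝ) * ((n : ℝ) + 1))
      (mul_ne_zero hmR (by positivity)) hη2 hn ?_
    have h := hee 2 (n + 3)
    have e1 : 2 + (n + 3) - 1 = n + 4 := by omega
    rw [e1] at h
    have e2 : (m : ℝ) * (((n + 3 : ℕ) : ℝ) - ((2 : ℕ) : ℝ)) = (m : ℝ) * ((n : ℝ) + 1) := by
      push_cast; ring
    rw [e2] at h
    exact h
  have h3p : ∀ n : ℕ, η (n + 3) ∈ S := by
    intro n
    induction n with
    | zero => exact hη3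
    | succ k ih => exact (by omega : k + 3 + 1 = k + 4) ▸ hup k ih
  have hηall : ∀ s : ℕ, η s ∈ S := by
    intro s
    match s with
    | 0 => exact hη0
    | 1 => exact hη1
    | 2 => exact hη2
    | (n + 3) => exact h3p n
  intro s
  refine ⟨hηall s, ?_⟩
  exact hstep (γ 1) (η s) (γ s) (-(m : ℝ)) (neg_ne_zero.mpr hmR) hγ1 (hηall s) (hge s)
end
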